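/- arXiv:2402.04155 — 6 statements merged into one kernel-verified Lean document; each statement's English description precedes it below -/
import Mathlib

section
/- Let E be a directed graph, R a unital commutative ring, and f : T_E* → L(R) a saturated function. If (H₁,S₁), (H₂,S₂), (𝔥,𝔰) are admissible pairs in T_E* with (𝔥,𝔰) = (H₁,S₁) ∨ (H₂,S₂), then ⋂_{u∈𝔥} φ_f(u) ∩ ⋂_{v∈𝔰} φ_f(v^𝔥) = (⋂_{u₁∈H₁} φ_f(u₁) ∩ ⋂_{v₁∈S₁} φ_f(v₁^{H₁})) ∩ (⋂_{u₂∈H₂} φ_f(u₂) ∩ ⋂_{v₂∈S₂} φ_f(v₂^{H₂})). -/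
namespace LPAQuot

/-- A directed graph `E = (E⁰, E¹, s, r)` with vertex type `V` and edge type `E`. -/
structure Graph (V E : Type) where
  s : E → V
  r : E → V

namespace Graph

variable {V E R : Type} [CommRing R] (G : Graph V E)

/-- `u` reaches `w` through a (possibly trivial) path. -/
def Reaches (u w : V) : Prop :=
  Relation.ReflTransGen (fun a b => ∃ e, G.s e = a ∧ G.r e = b) u w

/-- A set of vertices is hereditary if it is closed under ranges of paths. -/
def IsHereditary (H : Set V) : Prop :=
  ∀ ⦃u w : V⦄, u ∈ H → G.Reaches u w → w ∈ H

/-- A vertex is regular if `0 < |s⁻¹(v)| < ∞`. -/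
def IsRegular (v : V) : Prop :=
  {e | G.s e = v}.Finite ∧ {e | G.s e = v}.Nonempty

/-- A vertex is an infinite emitter if `|s⁻¹(v)| = ∞`. -/
def IsInfiniteEmitter (v : V) : Prop := {e | G.s e = v}.Infinite

/-- A hereditary set is saturated if every regular vertex all of whose emitted
edges have range in `H` lies in `H`. -/
def IsSaturated (H : Set V) : Prop :=
  ∀ ⦃v : V⦄, G.IsRegular v → (∀ e, G.s e = v → G.r e ∈ H) → v ∈ H

/-- Hereditary and saturated. -/
def IsHS (H : Set V) : Prop := G.IsHereditary H ∧ G.IsSaturated H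

/-- `v` is a breaking vertex of `H`: an infinite emitter `v ∉ H` with
`0 < |s⁻¹(v) ∩ r⁻¹(E⁰∖H)| < ∞`. -/
def IsBreaking (H : Set V) (v : V) : Prop :=
  G.IsInfiniteEmitter v ∧ v ∉ H ∧
    {e | G.s e = v ∧ G.r e ∉ H}.Finite ∧ {e | G.s e = v ∧ G.r e ∉ H}.Nonempty

/-- `H'` is `S`-closed: if `v ∈ S` and `r(s⁻¹(v)) ⊆ H'` then `v ∈ H'`. -/
def SClosed (S H' : Set V) : Prop :=
  ∀ v ∈ S, (∀ e, G.s e = v → G.r e ∈ H') → v ∈ H'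

/-- The `S`-saturation of `H`: the smallest hereditary saturated `S`-closed set
containing `H`. -/
def SSat (H S : Set V) : Set V :=
  ⋂₀ {H' | H ⊆ H' ∧ G.IsHS H' ∧ G.SClosed S H'}

/-- `H_v`, the intersection of all hereditary saturated sets containing `v`. -/
def Hv (v : V) : Set V := ⋂₀ {H | G.IsHS H ∧ v ∈ H}

lemma mem_Hv (v : V) : v ∈ G.Hv v := by
  simp only [Hv, Set.mem_sInter, Set.mem_setOf_eq]
  exact fun H hH => hH.2

lemma Hv_hereditary (v : V) : G.IsHereditary (G.Hv v) := by
  intro u w hu hw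
  simp only [Hv, Set.mem_sInter, Set.mem_setOf_eq] at hu ⊢
  exact fun H hH => hH.1.1 (hu H hH) hw

lemma Hv_saturated (v : V) : G.IsSaturated (G.Hv v) := by
  intro w hw hr
  simp only [Hv, Set.mem_sInter, Set.mem_setOf_eq]
  intro H hH
  refine hH.1.2 hw fun e he => ?_
  have h := hr e he
  simp only [Hv, Set.mem_sInter, Set.mem_setOf_eq] at h
  exact h H hH

/-- An admissible pair `(H, S)` other than `(∅, ∅)`; i.e. an element of `T_E^*`. -/
structure APair (Γ : Graph V E) where
  H : Set V
  S : Set V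
  hered : Γ.IsHereditary H
  sat : Γ.IsSaturated H
  breaking : ∀ v ∈ S, Γ.IsBreaking H v
  nontrivial : H.Nonempty ∨ S.Nonempty

/-- The first component `𝔥` of the join of a family of admissible pairs:
the `(⋃ᵢ Sᵢ)`-saturation of `⋃ᵢ Hᵢ`. -/
def joinH {ι : Type} (P : ι → G.APair) : Set V :=
  G.SSat (⋃ i, (P i).H) (⋃ i, (P i).S)

/-- The second component `𝔰 = (⋃ᵢ Sᵢ) ∖ 𝔥` of the join of a family of admissible pairs. -/
def joinS {ι : Type} (P : ι → G.APair) : Set V :=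
  (⋃ i, (P i).S) \ G.joinH P

/-- First component of the binary join `(H₁,S₁) ∨ (H₂,S₂)`. -/
def join2H (p₁ p₂ : G.APair) : Set V := G.SSat (p₁.H ∪ p₂.H) (p₁.S ∪ p₂.S)

/-- Second component of the binary join `(H₁,S₁) ∨ (H₂,S₂)`. -/
def join2S (p₁ p₂ : G.APair) : Set V := (p₁.S ∪ p₂.S) \ G.join2H p₁ p₂

/-- A saturated function `f : T_E^* → L(R)`:
`f(⋁ᵢ (Hᵢ,Sᵢ)) = ⋂ᵢ f((Hᵢ,Sᵢ))` for every family of admissible pairs. -/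
def IsSaturatedFun (f : G.APair → Ideal R) : Prop :=
  ∀ (ι : Type) (P : ι → G.APair) (q : G.APair),
    q.H = G.joinH P → q.S = G.joinS P → f q = ⨅ i, f (P i)

/-- The set `Ê⁰` of extended vertices: vertices together with symbols `v^H`
for `H` hereditary saturated and `v ∈ B_H`. -/
abbrev ExtVertex (Γ : Graph V E) : Type :=
  V ⊕ {p : Set V × V // Γ.IsHS p.1 ∧ Γ.IsBreaking p.1 p.2}

/-- The admissible pair `(H_u, ∅)`. -/
def pairOfVertex (u : V) : G.APair where
  H := G.Hv u
  S := ∅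
  hered := G.Hv_hereditary u
  sat := G.Hv_saturated u
  breaking := fun v hv => absurd hv (Set.notMem_empty v)
  nontrivial := Or.inl ⟨u, G.mem_Hv u⟩

/-- The admissible pair `(H, {v})` for `v ∈ B_H`. -/
def pairOfBreaking (H : Set V) (v : V) (hH : G.IsHS H) (hv : G.IsBreaking H v) :
    G.APair where
  H := H
  S := {v}
  hered := hH.1
  sat := hH.2
  breaking := fun w hw => by
    rw [Set.mem_singleton_iff] at hw
    subst hw
    exact hv
  nontrivial := Or.inr ⟨v, rfl⟩

/-- The function `φ_f : Ê⁰ → L(R)` associated to a saturated function `f`: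
`φ_f(u) = f((H_u, ∅))` and `φ_f(v^H) = f((H, {v}))`. -/
def phiOf (f : G.APair → Ideal R) : G.ExtVertex → Ideal R :=
  Sum.elim (fun u => f (G.pairOfVertex u))
    (fun p => f (G.pairOfBreaking p.1.1 p.1.2 p.2.1 p.2.2))

/-- `⋂_{u∈H} φ(u) ∩ ⋂_{v∈S} φ(v^H)`, that is, `f_φ((H,S))`. -/
def phiPair (φ : G.ExtVertex → Ideal R) (p : G.APair) : Ideal R :=
  (⨅ u : p.H, φ (Sum.inl u.1)) ⊓
    ⨅ v : p.S, φ (Sum.inr ⟨(p.H, v.1), ⟨p.hered, p.sat⟩, p.breaking v.1 v.2⟩)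

/-- The function `f_φ : T_E^* → L(R)` associated to `φ : Ê⁰ → L(R)`. -/
def satFunOf (φ : G.ExtVertex → Ideal R) : G.APair → Ideal R :=
  fun p => G.phiPair φ p

/-- A graded ideal function `φ : Ê⁰ → L(R)`: it satisfies
(i) `⋂_{u∈𝔥} φ(u) ∩ ⋂_{v∈𝔰} φ(v^𝔥)` splits over binary joins,
(ii) `H_v ⊆ H_u` implies `φ(u) ⊆ φ(v)`,
(iii) `φ(v^H) ⊆ ⋂_{w∈H} φ(w)`. -/
def IsGradedIdealFun (φ : G.ExtVertex → Ideal R) : Prop :=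
  (∀ p₁ p₂ q : G.APair, q.H = G.join2H p₁ p₂ → q.S = G.join2S p₁ p₂ →
      G.phiPair φ q = G.phiPair φ p₁ ⊓ G.phiPair φ p₂) ∧
  (∀ u v : V, G.Hv v ⊆ G.Hv u → φ (Sum.inl u) ≤ φ (Sum.inl v)) ∧
  (∀ (H : Set V) (hH : G.IsHS H) (v : V) (hv : G.IsBreaking H v),
      φ (Sum.inr ⟨(H, v), hH, hv⟩) ≤ ⨅ w : H, φ (Sum.inl w.1))

/-- The extended order `x ≥ y` on `Ê⁰`: on vertices it is the path order, each
breaking vertex `v` lies above the symbol `v^H`, and the symbols `v^H` are sinks. -/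
def extGE (Γ : Graph V E) : Γ.ExtVertex → Γ.ExtVertex → Prop
  | Sum.inl u, Sum.inl w => Γ.Reaches u w
  | Sum.inl u, Sum.inr p => Γ.Reaches u p.1.2
  | Sum.inr _, Sum.inl _ => False
  | Sum.inr p, Sum.inr q => p = q



lemma phiPair_phiOf_eq (f : G.APair → Ideal R) (hf : G.IsSaturatedFun f) (p : G.APair) :
    G.phiPair (G.phiOf f) p = f p := by
  classical
  set P : (↥p.H ⊕ ↥p.S) → G.APair :=
    Sum.elim (fun u => G.pairOfVertex u.1)
      (fun v => G.pairOfBreaking p.H v.1 ⟨p.hered, p.sat⟩ (p.breaking v.1 v.2)) with hP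
  have hUnionS : (⋃ i, (P i).S) = p.S := by
    ext v
    constructor
    · rintro hv
      obtain ⟨i, hv⟩ := Set.mem_iUnion.1 hv
      cases i with
      | inl u => exact absurd hv (Set.notMem_empty v)
      | inr w =>
        have : v = w.1 := hv
        rw [this]; exact w.2
    · intro hv
      exact Set.mem_iUnion.2 ⟨Sum.inr ⟨v, hv⟩, rfl⟩
  have hJoinH : G.joinH P = p.H := by
    apply subset_antisymm
    · apply Set.sInter_subset_of_mem
      refine ⟨?_, ⟨p.hered, p.sat⟩, ?_⟩
      · rintro x hx
        obtain ⟨i, hx⟩ := Set.mem_iUnion.1 hx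
        cases i with
        | inl u => exact Set.mem_sInter.1 hx p.H ⟨⟨p.hered, p.sat⟩, u.2⟩
        | inr w => exact hx
      · intro v hv hall
        rw [hUnionS] at hv
        exfalso
        obtain ⟨e, he, hre⟩ := (p.breaking v hv).2.2.2
        exact hre (hall e he)
    · intro u hu
      refine Set.mem_sInter.2 fun H' hH' => ?_
      exact hH'.1 (Set.mem_iUnion.2 ⟨Sum.inl ⟨u, hu⟩, G.mem_Hv u⟩)
  have hJoinS : G.joinS P = p.S := by
    rw [joinS, hJoinH, hUnionS]
    ext v
    simp only [Set.mem_diff, and_iff_left_iff_imp]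
    intro hv
    exact (p.breaking v hv).2.1
  rw [hf _ P p hJoinH.symm hJoinS.symm, iInf_sum]
  rfl

/-- For a saturated function `f`, if `(𝔥,𝔰) = (H₁,S₁) ∨ (H₂,S₂)` then
`⋂_{u∈𝔥} φ_f(u) ∩ ⋂_{v∈𝔰} φ_f(v^𝔥)
  = (⋂_{u₁∈H₁} φ_f(u₁) ∩ ⋂_{v₁∈S₁} φ_f(v₁^{H₁})) ∩ (⋂_{u₂∈H₂} φ_f(u₂) ∩ ⋂_{v₂∈S₂} φ_f(v₂^{H₂}))`. -/
theorem statement_0 (f : G.APair → Ideal R) (hf : G.IsSaturatedFun f)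
    (p₁ p₂ q : G.APair) (hH : q.H = G.join2H p₁ p₂) (hS : q.S = G.join2S p₁ p₂) :
    G.phiPair (G.phiOf f) q = G.phiPair (G.phiOf f) p₁ ⊓ G.phiPair (G.phiOf f) p₂ := by
  classical
  set P : Bool → G.APair := fun b => bif b then p₁ else p₂ with hPdef
  have hUH : (⋃ b, (P b).H) = p₁.H ∪ p₂.H := by
    ext x
    simp only [Set.mem_iUnion, Set.mem_union, Bool.exists_bool, hPdef, cond_false, cond_true]
    tauto
  have hUS : (⋃ b, (P b).S) = p₁.S ∪ p₂.S := by
    ext x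
    simp only [Set.mem_iUnion, Set.mem_union, Bool.exists_bool, hPdef, cond_false, cond_true]
    tauto
  have hJ : G.joinH P = G.join2H p₁ p₂ := by rw [joinH, join2H, hUH, hUS]
  have h1 : q.H = G.joinH P := hH.trans hJ.symm
  have h2 : q.S = G.joinS P := by rw [hS, join2S, joinS, hUS, hJ]
  rw [G.phiPair_phiOf_eq f hf q, G.phiPair_phiOf_eq f hf p₁, G.phiPair_phiOf_eq f hf p₂,
    hf Bool P q h1 h2, iInf_bool_eq]
  rfl



end Graph

end LPAQuot
end

section
/- Let E be a directed graph and R a unital commutative ring. Given a graded ideal function φ : Ê⁰ → L(R), the function f_φ : T_E* → L(R) defined by f_φ((H,S)) = ⋂_{u∈H} φ(u) ∩ ⋂_{v∈S} φ(v^H) is a saturated function. -/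
namespace LPAQuot

namespace Graph

variable {V E R : Type} [CommRing R] (G : Graph V E)

/-! ### Auxiliary lemmas for statement 3 -/

lemma subset_sSat (H S : Set V) : H ⊆ G.SSat H S := by
  intro x hx
  simp only [SSat, Set.mem_sInter, Set.mem_setOf_eq]
  exact fun K hK => hK.1 hx

lemma sSat_isHS (H S : Set V) : G.IsHS (G.SSat H S) := by
  constructor
  · intro u w hu hr
    simp only [SSat, Set.mem_sInter, Set.mem_setOf_eq] at hu ⊢
    exact fun K hK => hK.2.1.1 (hu K hK) hr
  · intro v hv hr
    simp only [SSat, Set.mem_sInter, Set.mem_setOf_eq]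
    intro K hK
    refine hK.2.1.2 hv fun e he => ?_
    have h := hr e he
    simp only [SSat, Set.mem_sInter, Set.mem_setOf_eq] at h
    exact h K hK

lemma sSat_sClosed (H S : Set V) : G.SClosed S (G.SSat H S) := by
  intro v hv hr
  simp only [SSat, Set.mem_sInter, Set.mem_setOf_eq]
  intro K hK
  refine hK.2.2 v hv fun e he => ?_
  have h := hr e he
  simp only [SSat, Set.mem_sInter, Set.mem_setOf_eq] at h
  exact h K hK

lemma sSat_min {H S K : Set V} (h1 : H ⊆ K) (h2 : G.IsHS K) (h3 : G.SClosed S K) :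
    G.SSat H S ⊆ K :=
  Set.sInter_subset_of_mem ⟨h1, h2, h3⟩

lemma Hv_min {K : Set V} {v : V} (hK : G.IsHS K) (hv : v ∈ K) : G.Hv v ⊆ K :=
  Set.sInter_subset_of_mem ⟨hK, hv⟩

lemma Hv_isHS (v : V) : G.IsHS (G.Hv v) := ⟨G.Hv_hereditary v, G.Hv_saturated v⟩

lemma Hv_reaches {u w : V} (h : G.Reaches u w) : G.Hv w ⊆ G.Hv u :=
  G.Hv_min (G.Hv_isHS u) ((G.Hv_hereditary u) (G.mem_Hv u) h)

lemma apair_ext {p q : G.APair} (h1 : p.H = q.H) (h2 : p.S = q.S) : p = q := by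
  obtain ⟨H1, S1, _, _, _, _⟩ := p
  obtain ⟨H2, S2, _, _, _, _⟩ := q
  simp only at h1 h2
  subst h1; subst h2
  rfl

lemma isBreaking_mono {H K : Set V} {v : V} (hv : G.IsBreaking H v) (hHK : H ⊆ K)
    (hvK : v ∉ K) (hne : {e | G.s e = v ∧ G.r e ∉ K}.Nonempty) : G.IsBreaking K v :=
  ⟨hv.1, hvK, hv.2.2.1.subset fun e he => ⟨he.1, fun h => he.2 (hHK h)⟩, hne⟩

lemma breaking_edge_exists {K S : Set V} (hK : G.SClosed S K) {v : V}
    (hvS : v ∈ S) (hvK : v ∉ K) : {e | G.s e = v ∧ G.r e ∉ K}.Nonempty := by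
  by_contra h
  rw [Set.not_nonempty_iff_eq_empty] at h
  refine hvK (hK v hvS fun e he => ?_)
  by_contra hre
  have : e ∈ {e | G.s e = v ∧ G.r e ∉ K} := ⟨he, hre⟩
  rw [h] at this
  exact this

/-- A pair `p` absorbed into a larger hereditary saturated `p.S`-closed set `K`:
the pair `(K, p.S \ K)`. -/
def absorb (p : G.APair) (K : Set V) (hK : G.IsHS K) (hPK : p.H ⊆ K)
    (hSK : G.SClosed p.S K) : G.APair where
  H := K
  S := p.S \ K
  hered := hK.1
  sat := hK.2
  breaking := fun v hv =>
    G.isBreaking_mono (p.breaking v hv.1) hPK hv.2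
      (G.breaking_edge_exists hSK hv.1 hv.2)
  nontrivial := by
    rcases p.nontrivial with ⟨x, hx⟩ | ⟨v, hv⟩
    · exact Or.inl ⟨x, hPK hx⟩
    · by_cases hvK : v ∈ K
      · exact Or.inl ⟨v, hvK⟩
      · exact Or.inr ⟨v, hv, hvK⟩

/-- The join of `p` with the pairs `(H_w, ∅)` for `w ∈ W`. -/
def extPair (p : G.APair) (W : Set V) : G.APair :=
  G.absorb p (G.SSat (p.H ∪ ⋃ w ∈ W, G.Hv w) p.S)
    (G.sSat_isHS _ _)
    ((Set.subset_union_left).trans (G.subset_sSat _ _))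
    (G.sSat_sClosed _ _)

lemma extPair_H (p : G.APair) (W : Set V) :
    (G.extPair p W).H = G.SSat (p.H ∪ ⋃ w ∈ W, G.Hv w) p.S := rfl

lemma extPair_S (p : G.APair) (W : Set V) :
    (G.extPair p W).S = p.S \ (G.extPair p W).H := rfl

lemma sSat_self (p : G.APair) : G.SSat p.H p.S = p.H := by
  refine subset_antisymm (G.sSat_min subset_rfl ⟨p.hered, p.sat⟩ ?_) (G.subset_sSat _ _)
  intro v hv hr
  obtain ⟨e, he, hre⟩ := (p.breaking v hv).2.2.2
  exact absurd (hr e he) hre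

lemma sdiff_H (p : G.APair) : p.S \ p.H = p.S := by
  rw [sdiff_eq_self_iff_disjoint]
  exact Set.disjoint_left.mpr fun a ha hs => (p.breaking a hs).2.1 ha

lemma extPair_empty (p : G.APair) : G.extPair p ∅ = p := by
  have h1 : (G.extPair p ∅).H = p.H := by
    rw [extPair_H]
    simp only [Set.mem_empty_iff_false, Set.iUnion_of_empty, Set.iUnion_empty,
      Set.union_empty]
    exact G.sSat_self p
  refine G.apair_ext h1 ?_
  rw [extPair_S, h1]
  exact G.sdiff_H p

lemma extPair_insert_H (p : G.APair) (W : Set V) (a : V) :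
    (G.extPair p (insert a W)).H = G.join2H (G.extPair p W) (G.pairOfVertex a) := by
  rw [extPair_H]
  show G.SSat (p.H ∪ ⋃ w ∈ insert a W, G.Hv w) p.S =
    G.SSat ((G.extPair p W).H ∪ G.Hv a) ((G.extPair p W).S ∪ ∅)
  set H' := (G.extPair p W).H with hH'
  have hH'def : H' = G.SSat (p.H ∪ ⋃ w ∈ W, G.Hv w) p.S := rfl
  set H'' := G.SSat (p.H ∪ ⋃ w ∈ insert a W, G.Hv w) p.S with hH''
  set K := G.SSat (H' ∪ G.Hv a) ((G.extPair p W).S ∪ ∅) with hK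
  have haH'' : a ∈ H'' := G.subset_sSat _ _ (Or.inr (Set.mem_biUnion (Set.mem_insert a W)
    (G.mem_Hv a)))
  refine subset_antisymm ?_ ?_
  · -- H'' ⊆ K
    refine G.sSat_min (Set.union_subset ?_ ?_) (G.sSat_isHS _ _) ?_
    · exact ((Set.subset_union_left).trans (G.subset_sSat _ _)).trans
        ((Set.subset_union_left).trans (G.subset_sSat _ _))
    · intro x hx
      obtain ⟨w, hw, hxw⟩ := Set.mem_iUnion₂.1 hx
      rcases hw with rfl | hw
      · exact G.subset_sSat _ _ (Or.inr hxw)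
      · refine (G.subset_sSat (H' ∪ G.Hv a) _) (Or.inl ?_)
        exact (G.subset_sSat _ _) (Or.inr (Set.mem_biUnion hw hxw))
    · -- K is p.S-closed
      intro v hv hr
      by_cases hvH' : v ∈ H'
      · exact G.subset_sSat _ _ (Or.inl hvH')
      · exact (G.sSat_sClosed _ _) v (Or.inl ⟨hv, hvH'⟩) hr
  · -- K ⊆ H''
    refine G.sSat_min (Set.union_subset ?_ (G.Hv_min (G.sSat_isHS _ _) haH'')) 
      (G.sSat_isHS _ _) ?_
    · -- H' ⊆ H''
      rw [hH'def]
      refine G.sSat_min (Set.union_subset ?_ ?_) (G.sSat_isHS _ _) (G.sSat_sClosed _ _)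
      · exact (Set.subset_union_left).trans (G.subset_sSat _ _)
      · intro x hx
        obtain ⟨w, hw, hxw⟩ := Set.mem_iUnion₂.1 hx
        exact G.subset_sSat _ _ (Or.inr (Set.mem_biUnion (Set.mem_insert_of_mem a hw) hxw))
    · -- H'' is ((extPair p W).S ∪ ∅)-closed
      intro v hv hr
      rcases hv with hv | hv
      · exact (G.sSat_sClosed _ _) v hv.1 hr
      · exact absurd hv (Set.notMem_empty v)

lemma extPair_insert_S (p : G.APair) (W : Set V) (a : V) :
    (G.extPair p (insert a W)).S = G.join2S (G.extPair p W) (G.pairOfVertex a) := by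
  have hsub : (G.extPair p W).H ⊆ (G.extPair p (insert a W)).H := by
    rw [extPair_H, extPair_H]
    refine G.sSat_min (Set.union_subset ?_ ?_) (G.sSat_isHS _ _) (G.sSat_sClosed _ _)
    · exact (Set.subset_union_left).trans (G.subset_sSat _ _)
    · intro x hx
      obtain ⟨w, hw, hxw⟩ := Set.mem_iUnion₂.1 hx
      exact G.subset_sSat _ _ (Or.inr (Set.mem_biUnion (Set.mem_insert_of_mem a hw) hxw))
  show p.S \ (G.extPair p (insert a W)).H =
    ((G.extPair p W).S ∪ ∅) \ G.join2H (G.extPair p W) (G.pairOfVertex a)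
  rw [Set.union_empty, ← G.extPair_insert_H p W a, extPair_S, Set.diff_diff,
    Set.union_eq_self_of_subset_left hsub]

/-- The admissible pair `(H, ∅)` for `H` hereditary saturated nonempty. -/
def pairOfHS (H : Set V) (hH : G.IsHS H) (hne : H.Nonempty) : G.APair :=
  ⟨H, ∅, hH.1, hH.2, fun v hv => absurd hv (Set.notMem_empty v), Or.inl hne⟩

lemma phiPair_pairOfHS (φ : G.ExtVertex → Ideal R) (H : Set V) (hH : G.IsHS H)
    (hne : H.Nonempty) :
    G.phiPair φ (G.pairOfHS H hH hne) = ⨅ u : H, φ (Sum.inl u.1) :=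
  le_antisymm inf_le_left
    (le_inf le_rfl (le_iInf fun w => absurd w.2 (Set.notMem_empty w.1)))

lemma phiPair_pairOfBreaking (φ : G.ExtVertex → Ideal R) (H : Set V) (v : V)
    (hH : G.IsHS H) (hv : G.IsBreaking H v) :
    G.phiPair φ (G.pairOfBreaking H v hH hv) =
      (⨅ u : H, φ (Sum.inl u.1)) ⊓ φ (Sum.inr ⟨(H, v), hH, hv⟩) := by
  refine le_antisymm (le_inf inf_le_left ?_) (le_inf inf_le_left (le_iInf ?_))
  · have h0 : G.phiPair φ (G.pairOfBreaking H v hH hv) ≤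
        ⨅ w : ((G.pairOfBreaking H v hH hv).S),
          φ (Sum.inr ⟨((G.pairOfBreaking H v hH hv).H, w.1),
            ⟨(G.pairOfBreaking H v hH hv).hered, (G.pairOfBreaking H v hH hv).sat⟩,
            (G.pairOfBreaking H v hH hv).breaking w.1 w.2⟩) := inf_le_right
    have hv0 : v ∈ (G.pairOfBreaking H v hH hv).S := rfl
    have h1 := iInf_le (fun w : ((G.pairOfBreaking H v hH hv).S) =>
      φ (Sum.inr ⟨((G.pairOfBreaking H v hH hv).H, w.1),
        ⟨(G.pairOfBreaking H v hH hv).hered, (G.pairOfBreaking H v hH hv).sat⟩,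
        (G.pairOfBreaking H v hH hv).breaking w.1 w.2⟩)) ⟨v, hv0⟩
    exact h0.trans h1
  rintro ⟨w, hw⟩
  have hwv : w = v := hw
  subst hwv
  exact inf_le_right

lemma fin_join (φ : G.ExtVertex → Ideal R) (hφ : G.IsGradedIdealFun φ)
    (p : G.APair) {W : Set V} (hW : W.Finite) :
    G.phiPair φ (G.extPair p W) =
      G.phiPair φ p ⊓ ⨅ w ∈ W, G.phiPair φ (G.pairOfVertex w) := by
  refine Set.Finite.induction_on (motive := fun W _ => G.phiPair φ (G.extPair p W) =
      G.phiPair φ p ⊓ ⨅ w ∈ W, G.phiPair φ (G.pairOfVertex w)) W hW ?_ ?_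
  · simp [G.extPair_empty p]
  · intro a s ha hs ih
    rw [hφ.1 (G.extPair p s) (G.pairOfVertex a) (G.extPair p (insert a s))
      (G.extPair_insert_H p s a) (G.extPair_insert_S p s a), ih, iInf_insert,
      inf_assoc, inf_comm (⨅ w ∈ s, G.phiPair φ (G.pairOfVertex w)) _]

/-- For a graded ideal function `φ`, the function
`f_φ((H,S)) = ⋂_{u∈H} φ(u) ∩ ⋂_{v∈S} φ(v^H)` is a saturated function. -/
theorem statement_3 (φ : G.ExtVertex → Ideal R) (hφ : G.IsGradedIdealFun φ) :
    G.IsSaturatedFun (G.satFunOf φ) := by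
  intro ι P q hqH hqS
  set I : Ideal R := ⨅ i, G.satFunOf φ (P i) with hI
  have hqHS : G.IsHS q.H := ⟨q.hered, q.sat⟩
  have hHsub : ∀ i, (P i).H ⊆ q.H := by
    intro i
    rw [hqH]
    exact (Set.subset_iUnion (fun i => (P i).H) i).trans (G.subset_sSat _ _)
  have hqClosed : G.SClosed (⋃ i, (P i).S) q.H := by
    rw [hqH]; exact G.sSat_sClosed _ _
  have hqS' : q.S = (⋃ i, (P i).S) \ q.H := by
    rw [hqS, hqH]; rfl
  -- the easy direction: f(q) ≤ f(Pᵢ)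
  have easy : ∀ i, G.satFunOf φ q ≤ G.satFunOf φ (P i) := by
    intro i
    have h1 : G.join2H q (P i) = q.H := by
      refine subset_antisymm (G.sSat_min (Set.union_subset subset_rfl (hHsub i)) hqHS ?_)
        ((Set.subset_union_left).trans (G.subset_sSat _ _))
      intro v hv hr
      refine hqClosed v ?_ hr
      rcases hv with hv | hv
      · rw [hqS'] at hv; exact hv.1
      · exact Set.mem_iUnion.2 ⟨i, hv⟩
    have h2 : q.S = G.join2S q (P i) := by
      show q.S = (q.S ∪ (P i).S) \ G.join2H q (P i)
      rw [h1, hqS']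
      ext v
      constructor
      · rintro ⟨hv, hnv⟩
        exact ⟨Or.inl ⟨hv, hnv⟩, hnv⟩
      · rintro ⟨hv, hnv⟩
        rcases hv with hv | hv
        · exact hv
        · exact ⟨Set.mem_iUnion.2 ⟨i, hv⟩, hnv⟩
    have := hφ.1 q (P i) q h1.symm h2
    exact this.le.trans inf_le_right
  have hIP : ∀ i, I ≤ G.satFunOf φ (P i) := fun i => iInf_le _ i
  have hA_vertex : ∀ w : V, I ≤ φ (Sum.inl w) → I ≤ G.phiPair φ (G.pairOfVertex w) := by
    intro w hw
    refine le_inf (le_iInf ?_) (le_iInf ?_)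
    · rintro ⟨u, hu⟩
      exact hw.trans (hφ.2.1 w u (G.Hv_min (G.Hv_isHS w) hu))
    · rintro ⟨x, hx⟩
      exact absurd hx (Set.notMem_empty x)
  have core : ∀ (p : G.APair) (W : Set V), W.Finite → I ≤ G.phiPair φ p →
      (∀ w ∈ W, I ≤ φ (Sum.inl w)) → ∀ v, v ∈ (G.extPair p W).H → I ≤ φ (Sum.inl v) := by
    intro p W hWfin hp hWA v hv
    have hle : I ≤ G.phiPair φ (G.extPair p W) := by
      rw [G.fin_join φ hφ p hWfin]
      exact le_inf hp (le_iInf fun w => le_iInf fun hw => hA_vertex w (hWA w hw))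
    exact hle.trans (inf_le_left.trans (iInf_le _ (⟨v, hv⟩ : ↥(G.extPair p W).H)))
  -- q.H lands in A = {u | I ≤ φ(inl u)}
  have hAq : ∀ u ∈ q.H, I ≤ φ (Sum.inl u) := by
    have : q.H ⊆ {u | I ≤ φ (Sum.inl u)} := by
      rw [hqH]
      refine G.sSat_min ?_ ⟨?_, ?_⟩ ?_
      · -- ⋃ i, Hᵢ ⊆ A
        intro u hu
        obtain ⟨i, hui⟩ := Set.mem_iUnion.1 hu
        exact (hIP i).trans (inf_le_left.trans (iInf_le _ (⟨u, hui⟩ : ↥(P i).H)))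
      · -- hereditary
        intro u w hu hr
        exact hu.trans (hφ.2.1 u w (G.Hv_reaches hr))
      · -- saturated
        intro v hreg hr
        obtain ⟨e₀, he₀⟩ := hreg.2
        refine core (G.pairOfVertex (G.r e₀)) (G.r '' {e | G.s e = v}) (hreg.1.image _)
          (hA_vertex _ (hr e₀ he₀)) ?_ v ?_
        · rintro w ⟨e, he, rfl⟩
          exact hr e he
        · rw [extPair_H]
          refine (G.sSat_isHS _ _).2 hreg fun e he => ?_
          exact G.subset_sSat _ _ (Or.inr (Set.mem_biUnion ⟨e, he, rfl⟩ (G.mem_Hv _)))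
      · -- (⋃ i, Sᵢ)-closed
        intro v hv hr
        obtain ⟨i, hvi⟩ := Set.mem_iUnion.1 hv
        have hbr := (P i).breaking v hvi
        refine core (P i) (G.r '' {e | G.s e = v ∧ G.r e ∉ (P i).H}) (hbr.2.2.1.image _)
          (hIP i) ?_ v ?_
        · rintro w ⟨e, he, rfl⟩
          exact hr e he.1
        · rw [extPair_H]
          refine (G.sSat_sClosed _ _) v hvi fun e he => ?_
          by_cases hre : G.r e ∈ (P i).H
          · exact G.subset_sSat _ _ (Or.inl hre)
          · exact G.subset_sSat _ _
              (Or.inr (Set.mem_biUnion ⟨e, ⟨he, hre⟩, rfl⟩ (G.mem_Hv _)))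
    exact fun u hu => this hu
  -- breaking symbols of q
  have hASq : ∀ v (hv : v ∈ q.S),
      I ≤ φ (Sum.inr ⟨(q.H, v), ⟨q.hered, q.sat⟩, q.breaking v hv⟩) := by
    intro v hv
    have hv' := hv
    rw [hqS'] at hv'
    obtain ⟨hvU, hvH⟩ := hv'
    obtain ⟨i, hvi⟩ := Set.mem_iUnion.1 hvU
    by_cases hqHne : q.H.Nonempty
    · -- binary join of (Hᵢ, {v}) and (q.H, ∅)
      have hPiHS : G.IsHS (P i).H := ⟨(P i).hered, (P i).sat⟩
      have hbrv := (P i).breaking v hvi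
      have hbrq : G.IsBreaking q.H v :=
        G.isBreaking_mono hbrv (hHsub i) hvH
          (G.breaking_edge_exists hqClosed hvU hvH)
      have h1 : (G.pairOfBreaking q.H v hqHS hbrq).H =
          G.join2H (G.pairOfBreaking (P i).H v hPiHS hbrv) (G.pairOfHS q.H hqHS hqHne) := by
        show q.H = G.SSat ((P i).H ∪ q.H) ({v} ∪ ∅)
        refine (subset_antisymm
          (G.sSat_min (Set.union_subset (hHsub i) subset_rfl) hqHS ?_)
          ((Set.subset_union_right).trans (G.subset_sSat _ _))).symm
        intro w hw hr
        rcases hw with hw | hw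
        · rw [Set.mem_singleton_iff] at hw
          subst hw
          exact hqClosed w hvU hr
        · exact absurd hw (Set.notMem_empty w)
      have h2 : (G.pairOfBreaking q.H v hqHS hbrq).S =
          G.join2S (G.pairOfBreaking (P i).H v hPiHS hbrv) (G.pairOfHS q.H hqHS hqHne) := by
        show ({v} : Set V) = ({v} ∪ ∅) \
          G.join2H (G.pairOfBreaking (P i).H v hPiHS hbrv) (G.pairOfHS q.H hqHS hqHne)
        rw [← h1]
        show ({v} : Set V) = ({v} ∪ ∅) \ q.H
        rw [Set.union_empty]
        symm
        rw [sdiff_eq_self_iff_disjoint]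
        refine Set.disjoint_left.mpr fun w hwH hwv => ?_
        have hwv' : w = v := hwv
        subst hwv'
        exact hvH hwH
      have hjoin := hφ.1 _ _ _ h1 h2
      have hle2 : I ≤ G.phiPair φ (G.pairOfBreaking q.H v hqHS hbrq) := by
        rw [hjoin, G.phiPair_pairOfBreaking, G.phiPair_pairOfHS]
        refine le_inf (le_inf ?_ ?_) ?_
        · exact (hIP i).trans inf_le_left
        · exact (hIP i).trans (inf_le_right.trans (iInf_le _ (⟨v, hvi⟩ : ↥(P i).S)))
        · exact le_iInf fun u => hAq u.1 u.2
      rw [G.phiPair_pairOfBreaking] at hle2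
      exact hle2.trans inf_le_right
    · -- q.H = ∅, so Hᵢ = ∅ and the symbol is already covered by f(Pᵢ)
      have hH0 : q.H = ∅ := Set.not_nonempty_iff_eq_empty.1 hqHne
      have hPiH : (P i).H = ∅ := by
        have := hHsub i
        rw [hH0] at this
        exact Set.subset_empty_iff.1 this
      have hle : I ≤ φ (Sum.inr ⟨((P i).H, v), ⟨(P i).hered, (P i).sat⟩,
          (P i).breaking v hvi⟩) :=
        (hIP i).trans (inf_le_right.trans (iInf_le _ (⟨v, hvi⟩ : ↥(P i).S)))
      refine hle.trans (le_of_eq (congrArg φ (congrArg Sum.inr (Subtype.ext ?_))))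
      show ((P i).H, v) = (q.H, v)
      rw [hPiH, hH0]
  refine le_antisymm (le_iInf easy) (le_inf (le_iInf ?_) (le_iInf ?_))
  · rintro ⟨u, hu⟩
    exact hAq u hu
  · rintro ⟨v, hv⟩
    exact hASq v hv



end Graph

end LPAQuot
end

section
/- Let E be a directed graph and R a unital commutative ring. For any graded ideal function φ : Ê⁰ → L(R), the graded ideal function associated to the saturated function f_φ coincides with φ; that is, φ_{f_φ} = φ, meaning f_φ((H_u,∅)) = φ(u) for every u ∈ E⁰ and f_φ((H,{v})) = φ(v^H) for every hereditary saturated H and v ∈ B_H. -/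
namespace LPAQuot

namespace Graph

variable {V E R : Type} [CommRing R] (G : Graph V E)

/-- For a graded ideal function `φ`, one has `φ_{f_φ} = φ`:
`f_φ((H_u,∅)) = φ(u)` for every vertex `u` and `f_φ((H,{v})) = φ(v^H)` for every
hereditary saturated `H` and `v ∈ B_H`. -/
theorem statement_4 (φ : G.ExtVertex → Ideal R) (hφ : G.IsGradedIdealFun φ) :
    (∀ u : V, G.satFunOf φ (G.pairOfVertex u) = φ (Sum.inl u)) ∧
    (∀ (H : Set V) (hH : G.IsHS H) (v : V) (hv : G.IsBreaking H v),
      G.satFunOf φ (G.pairOfBreaking H v hH hv) = φ (Sum.inr ⟨(H, v), hH, hv⟩)) := by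
  obtain ⟨h1, h2, h3⟩ := hφ
  constructor
  · intro u
    apply le_antisymm
    · exact inf_le_left.trans (iInf_le _ (⟨u, G.mem_Hv u⟩ : (G.pairOfVertex u).H))
    · refine le_inf (le_iInf fun w => ?_)
        (le_iInf fun v => absurd v.2 (Set.notMem_empty _))
      apply h2
      intro x hx
      exact hx (G.Hv u) ⟨⟨G.Hv_hereditary u, G.Hv_saturated u⟩, w.2⟩
  · intro H hH v hv
    simp only [satFunOf, phiPair, pairOfBreaking]
    apply le_antisymm
    · exact inf_le_right.trans (iInf_le _ (⟨v, rfl⟩ : ({v} : Set V)))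
    · refine le_inf (h3 H hH v hv) (le_iInf fun w => ?_)
      obtain ⟨w, hw⟩ := w
      rw [Set.mem_singleton_iff] at hw
      subst hw
      exact le_refl _



end Graph

end LPAQuot
end

section
/- Let E be a directed graph and R a unital commutative ring. For any saturated function f : T_E* → L(R), one has f_{φ_f} = f; that is, for every admissible pair (H,S) ∈ T_E*, ⋂_{u∈H} φ_f(u) ∩ ⋂_{v∈S} φ_f(v^H) = f((H,S)). -/
namespace LPAQuot

namespace Graph

variable {V E R : Type} [CommRing R] (G : Graph V E)

lemma Hv_subset {H : Set V} (hH : G.IsHS H) {u : V} (hu : u ∈ H) : G.Hv u ⊆ H :=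
  Set.sInter_subset_of_mem ⟨hH, hu⟩

lemma SSat_eq_self {H S : Set V} (hH : G.IsHS H) (hS : ∀ v ∈ S, G.IsBreaking H v) :
    G.SSat H S = H := by
  apply subset_antisymm
  · refine Set.sInter_subset_of_mem ⟨subset_rfl, hH, fun v hv hall => ?_⟩
    obtain ⟨e, he1, he2⟩ := (hS v hv).2.2.2
    exact absurd (hall e he1) he2
  · exact Set.subset_sInter fun H' hH' => hH'.1

/-- For a saturated function `f`, one has `f_{φ_f} = f`: for every
admissible pair `(H,S) ∈ T_E^*`, `⋂_{u∈H} φ_f(u) ∩ ⋂_{v∈S} φ_f(v^H) = f((H,S))`. -/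
theorem statement_5 (f : G.APair → Ideal R) (hf : G.IsSaturatedFun f) (p : G.APair) :
    G.satFunOf (G.phiOf f) p = f p := by
  classical
  let ι := (↥p.H ⊕ ↥p.S)
  let P : ι → G.APair := Sum.elim (fun u => G.pairOfVertex u.1)
    (fun v => G.pairOfBreaking p.H v.1 ⟨p.hered, p.sat⟩ (p.breaking v.1 v.2))
  have hUnionH : (⋃ i, (P i).H) = p.H := by
    apply subset_antisymm
    · apply Set.iUnion_subset
      rintro (u | v)
      · exact G.Hv_subset ⟨p.hered, p.sat⟩ u.2
      · exact subset_rfl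
    · intro u hu
      exact Set.mem_iUnion.2 ⟨Sum.inl ⟨u, hu⟩, G.mem_Hv u⟩
  have hUnionS : (⋃ i, (P i).S) = p.S := by
    apply subset_antisymm
    · apply Set.iUnion_subset
      rintro (u | v)
      · intro x hx; exact absurd hx (Set.notMem_empty x)
      · intro x hx
        rw [Set.mem_singleton_iff.1 hx]
        exact v.2
    · intro v hv
      exact Set.mem_iUnion.2 ⟨Sum.inr ⟨v, hv⟩, rfl⟩
  have hjH : p.H = G.joinH P := by
    rw [joinH, hUnionH, hUnionS, G.SSat_eq_self ⟨p.hered, p.sat⟩ p.breaking]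
  have hjS : p.S = G.joinS P := by
    rw [joinS, ← hjH, hUnionS]
    ext v
    simp only [Set.mem_diff, iff_self_and, and_iff_left_iff_imp]
    exact fun hv => (p.breaking v hv).2.1
  rw [hf ι P p hjH hjS, iInf_sum]
  rfl



end Graph

end LPAQuot
end

section
/- Let E be a directed graph and R a unital commutative ring. For graded ideal functions φ₁, φ₂ : Ê⁰ → L(R), one has φ₁ ≤ φ₂ (i.e., φ₁(x) ⊆ φ₂(x) for all x ∈ Ê⁰) if and only if f_{φ₁} ≤ f_{φ₂} (i.e., f_{φ₁}((H,S)) ⊆ f_{φ₂}((H,S)) for all (H,S) ∈ T_E*); hence the correspondence φ ↦ f_φ is an isomorphism of partially ordered sets between graded ideal functions and saturated functions. -/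
namespace LPAQuot

namespace Graph

variable {V E R : Type} [CommRing R] (G : Graph V E)

/-- For graded ideal functions `φ₁, φ₂`, one has `φ₁ ≤ φ₂` iff
`f_{φ₁} ≤ f_{φ₂}`; hence `φ ↦ f_φ` is an order isomorphism. -/
theorem statement_7 (φ₁ φ₂ : G.ExtVertex → Ideal R)
    (h₁ : G.IsGradedIdealFun φ₁) (h₂ : G.IsGradedIdealFun φ₂) :
    (∀ x : G.ExtVertex, φ₁ x ≤ φ₂ x) ↔
      (∀ p : G.APair, G.satFunOf φ₁ p ≤ G.satFunOf φ₂ p) := by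
  constructor
  · intro h p
    exact inf_le_inf (le_iInf fun u => (iInf_le _ u).trans (h _))
      (le_iInf fun v => (iInf_le _ v).trans (h _))
  · intro h x
    cases x with
    | inl u =>
      have l1 : φ₁ (Sum.inl u) ≤ G.satFunOf φ₁ (G.pairOfVertex u) := by
        refine le_inf (le_iInf fun w => ?_)
          (le_iInf fun v => absurd v.2 (Set.notMem_empty v.1))
        refine h₁.2.1 u w.1 (Set.sInter_subset_of_mem ?_)
        exact ⟨⟨G.Hv_hereditary u, G.Hv_saturated u⟩, w.2⟩
      have l2 : G.satFunOf φ₂ (G.pairOfVertex u) ≤ φ₂ (Sum.inl u) :=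
        inf_le_left.trans (iInf_le (fun w : (G.pairOfVertex u).H => φ₂ (Sum.inl w.1)) ⟨u, G.mem_Hv u⟩)
      exact l1.trans ((h _).trans l2)
    | inr q =>
      obtain ⟨⟨H, v⟩, hH, hv⟩ := q
      have l1 : φ₁ (Sum.inr ⟨(H, v), hH, hv⟩) ≤
          G.satFunOf φ₁ (G.pairOfBreaking H v hH hv) := by
        refine le_inf ((h₁.2.2 H hH v hv).trans (le_iInf fun w => iInf_le _ w))
          (le_iInf fun w => ?_)
        obtain ⟨w, hw⟩ := w
        have hwv : w = v := hw
        subst hwv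
        exact le_rfl
      have l2 : G.satFunOf φ₂ (G.pairOfBreaking H v hH hv) ≤
          φ₂ (Sum.inr ⟨(H, v), hH, hv⟩) := by
        refine inf_le_right.trans ?_
        exact iInf_le (fun w : ((G.pairOfBreaking H v hH hv).S : Set V) =>
          φ₂ (Sum.inr ⟨((G.pairOfBreaking H v hH hv).H, w.1),
            ⟨(G.pairOfBreaking H v hH hv).hered, (G.pairOfBreaking H v hH hv).sat⟩,
            (G.pairOfBreaking H v hH hv).breaking w.1 w.2⟩)) ⟨v, rfl⟩
      exact l1.trans ((h _).trans l2)



end Graph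

end LPAQuot
end

section
/- Let E be a directed graph. Every admissible pair (H,S) in T_E* equals the join of the family of admissible pairs {(H_u, ∅) : u ∈ H} ∪ {(H, {v}) : v ∈ S}; that is, (H,S) = ⋁_{u∈H} (H_u, ∅) ∨ ⋁_{v∈S} (H, {v}). -/
namespace LPAQuot

namespace Graph

variable {V E R : Type} [CommRing R] (G : Graph V E)

/-- Every admissible pair `(H,S) ∈ T_E^*` equals the join of the
family `{(H_u, ∅) : u ∈ H} ∪ {(H, {v}) : v ∈ S}`. -/
theorem statement_13 (p : G.APair) :
    p.H = G.joinH (Sum.elim (fun u : ↥p.H => G.pairOfVertex u.1)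
        (fun v : ↥p.S => G.pairOfBreaking p.H v.1 ⟨p.hered, p.sat⟩ (p.breaking v.1 v.2))) ∧
    p.S = G.joinS (Sum.elim (fun u : ↥p.H => G.pairOfVertex u.1)
        (fun v : ↥p.S => G.pairOfBreaking p.H v.1 ⟨p.hered, p.sat⟩ (p.breaking v.1 v.2))) := by
  set P := (Sum.elim (fun u : ↥p.H => G.pairOfVertex u.1)
      (fun v : ↥p.S => G.pairOfBreaking p.H v.1 ⟨p.hered, p.sat⟩ (p.breaking v.1 v.2)))
    with hP
  -- the union of S-components equals p.S
  have hSU : (⋃ i, (P i).S) = p.S := by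
    ext x
    simp only [Set.mem_iUnion]
    constructor
    · rintro ⟨i, hi⟩
      cases i with
      | inl u => exact absurd hi (Set.notMem_empty x)
      | inr v =>
        simp only [hP, Sum.elim_inr, pairOfBreaking, Set.mem_singleton_iff] at hi
        subst hi; exact v.2
    · intro hx
      exact ⟨Sum.inr ⟨x, hx⟩, rfl⟩
  -- p.H is in the defining family of the SSat
  have hmem : p.H ∈ {H' | (⋃ i, (P i).H) ⊆ H' ∧ G.IsHS H' ∧ G.SClosed (⋃ i, (P i).S) H'} := by
    refine ⟨?_, ⟨p.hered, p.sat⟩, ?_⟩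
    · intro x hx
      rw [Set.mem_iUnion] at hx
      obtain ⟨i, hi⟩ := hx
      cases i with
      | inl u =>
        simp only [hP, Sum.elim_inl, pairOfVertex] at hi
        exact hi p.H ⟨⟨p.hered, p.sat⟩, u.2⟩
      | inr v =>
        simpa [hP, pairOfBreaking] using hi
    · intro v hv hall
      rw [hSU] at hv
      obtain ⟨_, _, _, e, he, hre⟩ := p.breaking v hv
      exact absurd (hall e he) hre
  have hHeq : G.joinH P = p.H := by
    apply Set.Subset.antisymm
    · exact Set.sInter_subset_of_mem hmem
    · intro x hx
      intro H' hH'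
      apply hH'.1
      rw [Set.mem_iUnion]
      exact ⟨Sum.inl ⟨x, hx⟩, G.mem_Hv x⟩
  refine ⟨hHeq.symm, ?_⟩
  unfold joinS
  rw [hHeq, hSU]
  ext x
  simp only [Set.mem_diff]
  exact ⟨fun hx => ⟨hx, (p.breaking x hx).2.1⟩, fun h => h.1⟩



end Graph

end LPAQuot
end
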